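/- Let b be a real number and define Φ : {(τ,η) ∈ ℝ² : τ > 0 and b²η² < 2τ} → ℝ² by Φ(τ,η) = ( √(2τ − b²η²)(2b²η² − τ)/(3τ³), b²η√(2τ − b²η²)/τ² ). Then Φ is differentiable on its domain and the determinant of its Jacobian matrix at (τ,η) equals b²/τ⁴. In particular, if b ≠ 0 the Jacobian determinant is strictly positive at every point of the domain. -/

import Mathlib

/-- First component of the closed-form period map of Family 2. -/
noncomputable def Psi1 (b τ η : ℝ) : ℝ :=
  Real.sqrt (2*τ - b^2*η^2) * (2*b^2*η^2 - τ) / (3*τ^3)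

/-- Second component of the closed-form period map of Family 2. -/
noncomputable def Psi2 (b τ η : ℝ) : ℝ :=
  b^2*η*Real.sqrt (2*τ - b^2*η^2) / τ^2

lemma dPsi1dτ (b τ η : ℝ) (hτ : 0 < τ) (hD : 0 < 2*τ - b^2*η^2) :
    deriv (fun t => Psi1 b t η) τ
      = (τ^2 - 4*(b^2*η^2)*τ + 2*(b^2*η^2)^2) / (Real.sqrt (2*τ - b^2*η^2) * τ^4) := by
  have hlin : HasDerivAt (fun t : ℝ => 2*t - b^2*η^2) 2 τ := by
    simpa using ((hasDerivAt_id τ).const_mul 2).sub_const (b^2*η^2)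
  have hsq := hlin.sqrt hD.ne'
  have hneg : HasDerivAt (fun t : ℝ => 2*b^2*η^2 - t) (-1) τ := by
    simpa using (hasDerivAt_id τ).const_sub (2*b^2*η^2)
  have hnum := hsq.mul hneg
  have hden : HasDerivAt (fun t : ℝ => 3*t^3) (3*(3*τ^2)) τ := by
    simpa using (hasDerivAt_pow 3 τ).const_mul 3
  have hdiv := hnum.div hden (by positivity)
  rw [show (fun t => Psi1 b t η) = fun t : ℝ =>
      Real.sqrt (2*t - b^2*η^2) * (2*b^2*η^2 - t) / (3*t^3) from rfl]
  erw [hdiv.deriv]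
  simp only [Pi.mul_apply]
  obtain ⟨s, hs, hspos, hss⟩ : ∃ s, Real.sqrt (2*τ - b^2*η^2) = s ∧ 0 < s
      ∧ s*s = 2*τ - b^2*η^2 :=
    ⟨_, rfl, Real.sqrt_pos.mpr hD, Real.mul_self_sqrt hD.le⟩
  rw [hs]
  field_simp
  linear_combination (2*(τ - 3*b^2*η^2)) * hss

lemma dPsi1dη (b τ η : ℝ) (hτ : 0 < τ) (hD : 0 < 2*τ - b^2*η^2) :
    deriv (fun e => Psi1 b τ e) η
      = b^2*η*(3*τ - 2*b^2*η^2) / (Real.sqrt (2*τ - b^2*η^2) * τ^3) := by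
  have hη : HasDerivAt (fun e : ℝ => 2*τ - b^2*e^2) (-(b^2*(2*η))) η := by
    simpa using ((hasDerivAt_pow 2 η).const_mul (b^2)).const_sub (2*τ)
  have hsq := hη.sqrt hD.ne'
  have hfac : HasDerivAt (fun e : ℝ => 2*b^2*e^2 - τ) (2*b^2*(2*η)) η := by
    simpa using ((hasDerivAt_pow 2 η).const_mul (2*b^2)).sub_const τ
  have hdiv := (hsq.mul hfac).div_const (3*τ^3)
  rw [show (fun e => Psi1 b τ e) = fun e : ℝ =>
      Real.sqrt (2*τ - b^2*e^2) * (2*b^2*e^2 - τ) / (3*τ^3) from rfl]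
  erw [hdiv.deriv]
  obtain ⟨s, hs, hspos, hss⟩ : ∃ s, Real.sqrt (2*τ - b^2*η^2) = s ∧ 0 < s
      ∧ s*s = 2*τ - b^2*η^2 :=
    ⟨_, rfl, Real.sqrt_pos.mpr hD, Real.mul_self_sqrt hD.le⟩
  rw [hs]
  field_simp
  linear_combination (4*b^2*η) * hss

lemma dPsi2dη (b τ η : ℝ) (hτ : 0 < τ) (hD : 0 < 2*τ - b^2*η^2) :
    deriv (fun e => Psi2 b τ e) η
      = 2*b^2*(τ - b^2*η^2) / (Real.sqrt (2*τ - b^2*η^2) * τ^2) := by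
  have hη : HasDerivAt (fun e : ℝ => 2*τ - b^2*e^2) (-(b^2*(2*η))) η := by
    simpa using ((hasDerivAt_pow 2 η).const_mul (b^2)).const_sub (2*τ)
  have hsq := hη.sqrt hD.ne'
  have h1 : HasDerivAt (fun e : ℝ => b^2*e) (b^2) η := by
    simpa using (hasDerivAt_id η).const_mul (b^2)
  have hdiv := (h1.mul hsq).div_const (τ^2)
  rw [show (fun e => Psi2 b τ e) = fun e : ℝ =>
      b^2*e*Real.sqrt (2*τ - b^2*e^2) / τ^2 from rfl]
  erw [hdiv.deriv]
  obtain ⟨s, hs, hspos, hss⟩ : ∃ s, Real.sqrt (2*τ - b^2*η^2) = s ∧ 0 < s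
      ∧ s*s = 2*τ - b^2*η^2 :=
    ⟨_, rfl, Real.sqrt_pos.mpr hD, Real.mul_self_sqrt hD.le⟩
  rw [hs]
  field_simp
  linear_combination (b^2) * hss

lemma dPsi2dτ (b τ η : ℝ) (hτ : 0 < τ) (hD : 0 < 2*τ - b^2*η^2) :
    deriv (fun t => Psi2 b t η) τ
      = b^2*η*(2*b^2*η^2 - 3*τ) / (Real.sqrt (2*τ - b^2*η^2) * τ^3) := by
  have hlin : HasDerivAt (fun t : ℝ => 2*t - b^2*η^2) 2 τ := by
    simpa using ((hasDerivAt_id τ).const_mul 2).sub_const (b^2*η^2)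
  have hsq := hlin.sqrt hD.ne'
  have hnum := hsq.const_mul (b^2*η)
  have hdiv := hnum.div (hasDerivAt_pow 2 τ) (by positivity)
  rw [show (fun t => Psi2 b t η) = fun t : ℝ =>
      b^2*η*Real.sqrt (2*t - b^2*η^2) / t^2 from rfl]
  erw [hdiv.deriv]
  obtain ⟨s, hs, hspos, hss⟩ : ∃ s, Real.sqrt (2*τ - b^2*η^2) = s ∧ 0 < s
      ∧ s*s = 2*τ - b^2*η^2 :=
    ⟨_, rfl, Real.sqrt_pos.mpr hD, Real.mul_self_sqrt hD.le⟩
  rw [hs]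
  field_simp
  linear_combination (-2*b^2*η*τ) * hss

/-- The closed-form period map of Family 2 is differentiable on
`{τ > 0, b²η² < 2τ}`, its Jacobian determinant equals `b²/τ⁴`, and the latter is
positive when `b ≠ 0`. -/
theorem stmt_12 (b : ℝ) :
    (∀ τ η : ℝ, 0 < τ → b^2*η^2 < 2*τ →
      DifferentiableAt ℝ (fun p : ℝ × ℝ => (Psi1 b p.1 p.2, Psi2 b p.1 p.2)) (τ, η)) ∧
    (∀ τ η : ℝ, 0 < τ → b^2*η^2 < 2*τ →
      deriv (fun t => Psi1 b t η) τ * deriv (fun e => Psi2 b τ e) η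
        - deriv (fun e => Psi1 b τ e) η * deriv (fun t => Psi2 b t η) τ
        = b^2 / τ^4) ∧
    (b ≠ 0 → ∀ τ η : ℝ, 0 < τ → b^2*η^2 < 2*τ → 0 < b^2 / τ^4) := by
  refine ⟨?_, ?_, ?_⟩
  · intro τ η hτ hlt
    have hD : 0 < 2*τ - b^2*η^2 := by linarith
    have hin : DifferentiableAt ℝ (fun p : ℝ × ℝ => 2*p.1 - b^2*p.2^2) (τ, η) := by
      fun_prop
    have hsq : DifferentiableAt ℝ
        (fun p : ℝ × ℝ => Real.sqrt (2*p.1 - b^2*p.2^2)) (τ, η) :=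
      hin.sqrt hD.ne'
    have ha : DifferentiableAt ℝ (fun p : ℝ × ℝ => 2*b^2*p.2^2 - p.1) (τ, η) := by
      fun_prop
    have hb1 : DifferentiableAt ℝ (fun p : ℝ × ℝ => 3*p.1^3) (τ, η) := by fun_prop
    have hc : DifferentiableAt ℝ (fun p : ℝ × ℝ => b^2*p.2) (τ, η) := by fun_prop
    have hd : DifferentiableAt ℝ (fun p : ℝ × ℝ => p.1^2) (τ, η) := by fun_prop
    have h1 : DifferentiableAt ℝ (fun p : ℝ × ℝ =>
        Real.sqrt (2*p.1 - b^2*p.2^2) * (2*b^2*p.2^2 - p.1) / (3*p.1^3)) (τ, η) := by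
      have hne : (3*τ^3 : ℝ) ≠ 0 := by positivity
      simp only [div_eq_mul_inv]
      exact (hsq.mul ha).mul (hb1.inv hne)
    have h2 : DifferentiableAt ℝ (fun p : ℝ × ℝ =>
        b^2*p.2 * Real.sqrt (2*p.1 - b^2*p.2^2) / p.1^2) (τ, η) := by
      have hne : (τ^2 : ℝ) ≠ 0 := by positivity
      simp only [div_eq_mul_inv]
      exact (hc.mul hsq).mul (hd.inv hne)
    exact h1.prodMk h2
  · intro τ η hτ hlt
    have hD : 0 < 2*τ - b^2*η^2 := by linarith
    rw [dPsi1dτ b τ η hτ hD, dPsi1dη b τ η hτ hD, dPsi2dη b τ η hτ hD,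
      dPsi2dτ b τ η hτ hD]
    obtain ⟨s, hs, hspos, hss⟩ : ∃ s, Real.sqrt (2*τ - b^2*η^2) = s ∧ 0 < s
        ∧ s*s = 2*τ - b^2*η^2 :=
      ⟨_, rfl, Real.sqrt_pos.mpr hD, Real.mul_self_sqrt hD.le⟩
    rw [hs]
    field_simp
    linear_combination (-(b^2*τ^2)) * hss
  · intro hb τ η hτ _
    positivity
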